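/- arXiv:1311.5274 — 4 statements merged into one kernel-verified Lean document; each statement's English description precedes it below -/
import Mathlib

section
/- Under the orthogonal sparsity model with λₙ → ∞, the truncated second-moment estimator σ̃²ₙ = (1/n)·Σᵢ₌₁ⁿ min{Yᵢ², λₙ²} satisfies E[σ̃²ₙ] → σ². -/
open MeasureTheory ProbabilityTheory Filter Finset

/-- The orthogonal sparsity model: for sample size `n`, the joint law on `Fin n → ℝ`
of independent Gaussians `Yᵢ ~ N(βᵢ, σ²)`, where `βᵢ = β` for the first `⌈n^α⌉`
indices and `βᵢ = 0` otherwise. -/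
noncomputable def orthoModel (β σ α : ℝ) (n : ℕ) : Measure (Fin n → ℝ) :=
  Measure.pi fun i =>
    gaussianReal (if (i : ℕ) < ⌈(n : ℝ)^α⌉₊ then β else 0) ⟨σ^2, sq_nonneg σ⟩

open Real Topology
open scoped NNReal ENNReal

section Aux

instance myAux_instProb (μ : ℝ) (v : {r : ℝ // 0 ≤ r}) :
    IsProbabilityMeasure (gaussianReal μ v) :=
  instIsProbabilityMeasureGaussianReal μ v

lemma myAux_integrable_sq_exp {b : ℝ} (hb : 0 < b) :
    Integrable (fun x : ℝ => x ^ 2 * rexp (-b * x ^ 2)) := by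
  have h := integrable_rpow_mul_exp_neg_mul_sq hb (s := 2) (by norm_num)
  convert h using 2 with x
  rw [show (2:ℝ) = ((2:ℕ):ℝ) by norm_num, Real.rpow_natCast]

lemma myAux_integral_sq_exp {b : ℝ} (hb : 0 < b) :
    ∫ x : ℝ, x ^ 2 * rexp (-b * x ^ 2) = (2 * b)⁻¹ * Real.sqrt (π / b) := by
  have hint2 := myAux_integrable_sq_exp hb
  have hint1 : Integrable (fun x : ℝ => rexp (-b * x ^ 2)) := integrable_exp_neg_mul_sq hb
  set F : ℝ → ℝ := fun x => -(2*b)⁻¹ * (x * rexp (-b * x ^ 2)) with hF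
  have hderiv : ∀ x : ℝ, HasDerivAt F
      (x ^ 2 * rexp (-b * x ^ 2) - (2*b)⁻¹ * rexp (-b * x ^ 2)) x := by
    intro x
    have h1 : HasDerivAt (fun x : ℝ => -b * x ^ 2) (-b * (2 * x)) x := by
      simpa [mul_comm] using (hasDerivAt_pow 2 x).const_mul (-b)
    have h2 := h1.exp
    have h3 : HasDerivAt (fun x : ℝ => x * rexp (-b * x ^ 2))
        (1 * rexp (-b*x^2) + x * (rexp (-b*x^2) * (-b * (2*x)))) x :=
      (hasDerivAt_id x).mul h2
    have h4 := h3.const_mul (-(2*b)⁻¹)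
    refine h4.congr_deriv ?_
    have hb1 : (2*b)⁻¹ * (2*b) = 1 := inv_mul_cancel₀ (by positivity)
    linear_combination (x^2 * rexp (-b*x^2)) * hb1
  have hxtop : Tendsto (fun x : ℝ => x * rexp (-b * x ^ 2)) atTop (𝓝 0) := by
    have h := rpow_mul_exp_neg_mul_sq_isLittleO_exp_neg hb 1
    have h2 : Tendsto (fun x : ℝ => rexp (-(1/2) * x)) atTop (𝓝 0) :=
      Real.tendsto_exp_atBot.comp (tendsto_id.const_mul_atTop_of_neg (by norm_num))
    have h3 := h.trans_tendsto h2
    refine h3.congr ?_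
    intro x; rw [Real.rpow_one]
  have htop : Tendsto F atTop (𝓝 0) := by
    have h := hxtop.const_mul (-(2*b)⁻¹)
    rwa [mul_zero] at h
  have hbot : Tendsto F atBot (𝓝 0) := by
    have h1 : Tendsto (fun x : ℝ => F (-x)) atBot (𝓝 0) :=
      htop.comp tendsto_neg_atBot_atTop
    have h2 : (fun x : ℝ => F (-x)) = fun x => -F x := by
      funext x; simp only [hF]; ring_nf
    rw [h2] at h1
    simpa using h1.neg
  have key := integral_of_hasDerivAt_of_tendsto hderiv
    (hint2.sub (hint1.const_mul _)) hbot htop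
  rw [sub_zero, integral_sub hint2 (hint1.const_mul _), integral_const_mul,
    integral_gaussian] at key
  linarith

lemma myAux_gaussianReal_eq_withDensity (m : ℝ) {v : ℝ≥0} (hv : v ≠ 0) :
    gaussianReal m v
      = volume.withDensity fun x => ((gaussianPDFReal m v x).toNNReal : ℝ≥0∞) :=
  gaussianReal_of_var_ne_zero m hv

lemma myAux_integral_gaussianReal (m : ℝ) {v : ℝ≥0} (hv : v ≠ 0) (g : ℝ → ℝ) :
    ∫ x, g x ∂(gaussianReal m v) = ∫ x, gaussianPDFReal m v x * g x := by
  rw [myAux_gaussianReal_eq_withDensity m hv,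
    integral_withDensity_eq_integral_smul (measurable_gaussianPDFReal m v).real_toNNReal]
  congr 1 with x
  rw [NNReal.smul_def, smul_eq_mul, Real.coe_toNNReal _ (gaussianPDFReal_nonneg m v x)]

lemma myAux_integrable_gaussianReal_iff (m : ℝ) {v : ℝ≥0} (hv : v ≠ 0) {g : ℝ → ℝ} :
    Integrable g (gaussianReal m v)
      ↔ Integrable (fun x => gaussianPDFReal m v x * g x) := by
  rw [myAux_gaussianReal_eq_withDensity m hv,
    integrable_withDensity_iff_integrable_smul (measurable_gaussianPDFReal m v).real_toNNReal]
  constructor <;> intro h <;> refine h.congr (Filter.Eventually.of_forall fun x => ?_) <;>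
    simp only [NNReal.smul_def, smul_eq_mul,
      Real.coe_toNNReal _ (gaussianPDFReal_nonneg m v x)]

lemma myAux_vne {σ : ℝ} (hσ : 0 < σ) : (⟨σ^2, sq_nonneg σ⟩ : ℝ≥0) ≠ 0 := by
  intro h
  have h' := congrArg Subtype.val h
  simp at h'
  nlinarith

lemma myAux_pdf_zero_eq {σ : ℝ} (x : ℝ) :
    gaussianPDFReal 0 ⟨σ^2, sq_nonneg σ⟩ x
      = (Real.sqrt (2 * π * σ^2))⁻¹ * rexp (-(2*σ^2)⁻¹ * x^2) := by
  show (√(2 * π * σ^2))⁻¹ * rexp (-(x - 0) ^ 2 / (2 * σ^2)) = _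
  simp only [NNReal.coe_mk, sub_zero]
  congr 1
  ring

lemma myAux_integrable_sq_gaussianReal {σ : ℝ} (hσ : 0 < σ) :
    Integrable (fun x : ℝ => x ^ 2) (gaussianReal 0 ⟨σ^2, sq_nonneg σ⟩) := by
  rw [myAux_integrable_gaussianReal_iff 0 (myAux_vne hσ)]
  have hb : (0:ℝ) < (2*σ^2)⁻¹ := by positivity
  have h := (myAux_integrable_sq_exp hb).const_mul (Real.sqrt (2 * π * σ^2))⁻¹
  refine h.congr (Filter.Eventually.of_forall fun x => ?_)
  dsimp only
  rw [myAux_pdf_zero_eq]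
  ring

lemma myAux_integral_sq_gaussianReal {σ : ℝ} (hσ : 0 < σ) :
    ∫ x, x ^ 2 ∂(gaussianReal 0 ⟨σ^2, sq_nonneg σ⟩) = σ ^ 2 := by
  rw [myAux_integral_gaussianReal 0 (myAux_vne hσ)]
  have hb : (0:ℝ) < (2*σ^2)⁻¹ := by positivity
  calc ∫ x, gaussianPDFReal 0 ⟨σ^2, sq_nonneg σ⟩ x * x ^ 2
      = (Real.sqrt (2 * π * σ^2))⁻¹ * ∫ x, x ^ 2 * rexp (-(2*σ^2)⁻¹ * x ^ 2) := by
        rw [← integral_const_mul]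
        congr 1 with x
        rw [myAux_pdf_zero_eq]
        ring
    _ = σ ^ 2 := by
        rw [myAux_integral_sq_exp hb]
        have h1 : (2 * (2*σ^2)⁻¹)⁻¹ = σ^2 := by field_simp
        have h2 : π / (2*σ^2)⁻¹ = 2 * π * σ^2 := by field_simp
        rw [h1, h2]
        have h3 : Real.sqrt (2 * π * σ^2) ≠ 0 := by
          refine (Real.sqrt_ne_zero ?_).mpr ?_ <;> positivity
        field_simp

lemma myAux_meas_min (t : ℝ) : Measurable fun x : ℝ => min (x ^ 2) (t ^ 2) :=
  (measurable_id.pow_const 2).min measurable_const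

lemma myAux_integrable_min_sq {μ : Measure ℝ} [IsProbabilityMeasure μ] (t : ℝ) :
    Integrable (fun x : ℝ => min (x ^ 2) (t ^ 2)) μ := by
  refine (integrable_const (t^2)).mono' (myAux_meas_min t).aestronglyMeasurable ?_
  refine Filter.Eventually.of_forall fun x => ?_
  rw [Real.norm_eq_abs, abs_of_nonneg (le_min (sq_nonneg x) (sq_nonneg t))]
  exact min_le_right _ _

lemma myAux_gauss_shift (c : ℝ) (v : ℝ≥0) :
    gaussianReal c v = (gaussianReal 0 v).map (· + c) := by
  rw [gaussianReal_map_add_const, zero_add]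

lemma myAux_integrable_sub_sq {σ : ℝ} (hσ : 0 < σ) (c : ℝ) :
    Integrable (fun x : ℝ => (x - c) ^ 2) (gaussianReal c ⟨σ^2, sq_nonneg σ⟩) := by
  rw [myAux_gauss_shift c ⟨σ^2, sq_nonneg σ⟩,
    show (fun x : ℝ => x + c) = ⇑(MeasurableEquiv.addRight c) from rfl,
    (MeasurableEquiv.addRight c).measurableEmbedding.integrable_map_iff]
  have := myAux_integrable_sq_gaussianReal hσ
  refine this.congr (Filter.Eventually.of_forall fun x => ?_)
  simp [MeasurableEquiv.addRight]

lemma myAux_integral_sub_sq {σ : ℝ} (hσ : 0 < σ) (c : ℝ) :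
    ∫ x, (x - c) ^ 2 ∂(gaussianReal c ⟨σ^2, sq_nonneg σ⟩) = σ ^ 2 := by
  rw [myAux_gauss_shift c ⟨σ^2, sq_nonneg σ⟩, integral_map (measurable_add_const c).aemeasurable
    (Measurable.aestronglyMeasurable (by measurability) :
      AEStronglyMeasurable (fun x : ℝ => (x - c) ^ 2) _)]
  simp only [add_sub_cancel_right]
  exact myAux_integral_sq_gaussianReal hσ

lemma myAux_integral_min_le {σ : ℝ} (hσ : 0 < σ) (c t : ℝ) :
    ∫ x, min (x ^ 2) (t ^ 2) ∂(gaussianReal c ⟨σ^2, sq_nonneg σ⟩)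
      ≤ 2 * c ^ 2 + 2 * σ ^ 2 := by
  have h1 : ∫ x, (2 * (x - c) ^ 2 + 2 * c ^ 2) ∂(gaussianReal c ⟨σ^2, sq_nonneg σ⟩)
      = 2 * c ^ 2 + 2 * σ ^ 2 := by
    rw [integral_add ((myAux_integrable_sub_sq hσ c).const_mul 2) (integrable_const _),
      integral_const_mul, myAux_integral_sub_sq hσ c, integral_const]
    simp [measure_univ]
    ring
  rw [← h1]
  refine integral_mono (myAux_integrable_min_sq t)
    (((myAux_integrable_sub_sq hσ c).const_mul 2).add (integrable_const _)) fun x => ?_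
  have := min_le_left (x^2) (t^2)
  nlinarith [sq_nonneg (x - 2*c)]

lemma myAux_tendsto_G0 {σ : ℝ} (hσ : 0 < σ) (lam : ℕ → ℝ)
    (hlam : Filter.Tendsto lam atTop atTop) :
    Filter.Tendsto (fun n => ∫ x, min (x ^ 2) ((lam n) ^ 2)
        ∂(gaussianReal 0 ⟨σ^2, sq_nonneg σ⟩))
      atTop (𝓝 (σ ^ 2)) := by
  have key : Filter.Tendsto (fun n => ∫ x, min (x ^ 2) ((lam n) ^ 2)
      ∂(gaussianReal 0 ⟨σ^2, sq_nonneg σ⟩))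
      atTop (𝓝 (∫ x, x ^ 2 ∂(gaussianReal 0 ⟨σ^2, sq_nonneg σ⟩))) := by
    refine tendsto_integral_of_dominated_convergence (fun x => x ^ 2)
      (fun n => (myAux_meas_min (lam n)).aestronglyMeasurable)
      (myAux_integrable_sq_gaussianReal hσ) (fun n => ?_) ?_
    · refine Filter.Eventually.of_forall fun x => ?_
      rw [Real.norm_eq_abs, abs_of_nonneg (le_min (sq_nonneg x) (sq_nonneg _))]
      exact min_le_left _ _
    · refine Filter.Eventually.of_forall fun x => ?_
      refine Filter.Tendsto.congr' ?_ tendsto_const_nhds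
      filter_upwards [hlam.eventually (Filter.eventually_ge_atTop |x|)] with n hn
      refine (min_eq_left ?_).symm
      calc x ^ 2 = |x| ^ 2 := (sq_abs x).symm
      _ ≤ (lam n) ^ 2 := by
          have := abs_nonneg x
          nlinarith
  rwa [myAux_integral_sq_gaussianReal hσ] at key

lemma myAux_pi_map_eval {n : ℕ} (μ : Fin n → Measure ℝ)
    [∀ i, IsProbabilityMeasure (μ i)] (i : Fin n) :
    (Measure.pi μ).map (fun y => y i) = μ i := by
  ext s hs
  rw [Measure.map_apply (measurable_pi_apply i) hs]
  have h1 : (fun y : Fin n → ℝ => y i) ⁻¹' s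
      = Set.pi Set.univ (Function.update (fun _ => Set.univ) i s) :=
    Set.eval_preimage.trans rfl
  rw [h1, Measure.pi_pi]
  refine (Finset.prod_eq_single i (fun j _ hj => ?_)
    (fun h => absurd (Finset.mem_univ i) h)).trans ?_
  · rw [Function.update_of_ne hj]
    exact measure_univ
  · rw [Function.update_self]

lemma myAux_pi_integral_eval {n : ℕ} (μ : Fin n → Measure ℝ)
    [∀ i, IsProbabilityMeasure (μ i)] (i : Fin n) (g : ℝ → ℝ) (hg : Measurable g) :
    ∫ y, g (y i) ∂(Measure.pi μ) = ∫ x, g x ∂(μ i) := by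
  rw [← myAux_pi_map_eval μ i,
    integral_map (measurable_pi_apply i).aemeasurable hg.aestronglyMeasurable]

lemma myAux_sum_ite_fin (n K : ℕ) (hK : K ≤ n) (A B : ℝ) :
    ∑ i : Fin n, (if (i : ℕ) < K then A else B) = K * A + (n - K : ℕ) * B := by
  rw [Fin.sum_univ_eq_sum_range (fun i => if i < K then A else B)]
  rw [← Finset.sum_range_add_sum_Ico _ hK]
  have h1 : ∑ i ∈ Finset.range K, (if i < K then A else B) = K * A := by
    rw [Finset.sum_congr rfl (fun i hi => if_pos (Finset.mem_range.mp hi)),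
      Finset.sum_const, Finset.card_range, nsmul_eq_mul]
  have h2 : ∑ i ∈ Finset.Ico K n, (if i < K then A else B) = (n - K : ℕ) * B := by
    rw [Finset.sum_congr rfl (fun i hi =>
      if_neg (not_lt.mpr (Finset.mem_Ico.mp hi).1)), Finset.sum_const,
      Nat.card_Ico, nsmul_eq_mul]
  rw [h1, h2]

lemma myAux_expectation_eq (β σ α t : ℝ) (n : ℕ) (hn : 1 ≤ n)
    (hkn : ⌈(n:ℝ)^α⌉₊ ≤ n) :
    ∫ y, (1 / (n : ℝ)) * ∑ i : Fin n, min ((y i)^2) (t^2) ∂(orthoModel β σ α n)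
      = ((⌈(n:ℝ)^α⌉₊ : ℝ)/n)
          * (∫ x, min (x^2) (t^2) ∂(gaussianReal β ⟨σ^2, sq_nonneg σ⟩))
        + (1 - (⌈(n:ℝ)^α⌉₊ : ℝ)/n)
          * (∫ x, min (x^2) (t^2) ∂(gaussianReal 0 ⟨σ^2, sq_nonneg σ⟩)) := by
  set K := ⌈(n:ℝ)^α⌉₊ with hKdef
  set μs : Fin n → Measure ℝ :=
    fun i => gaussianReal (if (i : ℕ) < K then β else 0) ⟨σ^2, sq_nonneg σ⟩ with hμs
  have hmodel : orthoModel β σ α n = Measure.pi μs := rfl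
  rw [hmodel, integral_const_mul,
    integral_finset_sum Finset.univ (fun i _ => ?_)]
  swap
  · refine (integrable_const (t^2)).mono'
      (((measurable_pi_apply i).pow_const 2).min measurable_const).aestronglyMeasurable
      (Filter.Eventually.of_forall fun y => ?_)
    rw [Real.norm_eq_abs, abs_of_nonneg (le_min (sq_nonneg _) (sq_nonneg t))]
    exact min_le_right _ _
  have h2 : ∀ i : Fin n, ∫ y, min ((y i)^2) (t^2) ∂(Measure.pi μs)
      = (if (i : ℕ) < K
          then ∫ x, min (x^2) (t^2) ∂(gaussianReal β ⟨σ^2, sq_nonneg σ⟩)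
          else ∫ x, min (x^2) (t^2) ∂(gaussianReal 0 ⟨σ^2, sq_nonneg σ⟩)) := by
    intro i
    rw [myAux_pi_integral_eval μs i _ (myAux_meas_min t), hμs]
    dsimp only
    rw [apply_ite (fun c => ∫ x, min (x^2) (t^2) ∂(gaussianReal c ⟨σ^2, sq_nonneg σ⟩))]
  rw [Finset.sum_congr rfl (fun i _ => h2 i), myAux_sum_ite_fin n K hkn]
  have hn0 : (n:ℝ) ≠ 0 := by positivity
  rw [Nat.cast_sub hkn]
  field_simp

end Aux

/-- Under the orthogonal sparsity model with `λₙ → ∞`, the truncated second-moment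
estimator `σ̃²ₙ = (1/n) Σᵢ min{Yᵢ², λₙ²}` satisfies `E[σ̃²ₙ] → σ²`. -/
theorem truncated_second_moment_expectation_tendsto
    (β σ α : ℝ) (hσ : 0 < σ) (hα0 : 0 ≤ α) (hα1 : α < 1)
    (lam : ℕ → ℝ) (hlam : Tendsto lam atTop atTop) :
    Tendsto
      (fun n => ∫ y, (1 / (n : ℝ)) * ∑ i : Fin n,
        min ((y i)^2) ((lam n)^2) ∂(orthoModel β σ α n))
      atTop (nhds (σ^2)) := by
  have hkn : ∀ n : ℕ, 1 ≤ n → ⌈(n:ℝ)^α⌉₊ ≤ n := by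
    intro n hn
    refine Nat.ceil_le.mpr ?_
    calc ((n:ℝ))^α ≤ ((n:ℝ))^(1:ℝ) :=
          Real.rpow_le_rpow_of_exponent_le (by exact_mod_cast hn) hα1.le
    _ = n := Real.rpow_one _
  have hk0 : Tendsto (fun n : ℕ => ((⌈(n:ℝ)^α⌉₊ : ℝ)) / n) atTop (𝓝 0) := by
    have hup : Tendsto (fun n : ℕ => (n:ℝ)^(α-1) + (n:ℝ)⁻¹) atTop (𝓝 (0 + 0)) := by
      refine Tendsto.add ?_ ?_
      · have h := (tendsto_rpow_neg_atTop (by linarith : (0:ℝ) < 1 - α)).comp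
          tendsto_natCast_atTop_atTop
        simpa [neg_sub, Function.comp_def] using h
      · exact tendsto_inv_atTop_zero.comp tendsto_natCast_atTop_atTop
    rw [add_zero] at hup
    refine tendsto_of_tendsto_of_tendsto_of_le_of_le' tendsto_const_nhds hup ?_ ?_
    · filter_upwards [eventually_ge_atTop 1] with n hn
      positivity
    · filter_upwards [eventually_ge_atTop 1] with n hn
      have hn0 : (0:ℝ) < n := by exact_mod_cast hn
      have hceil : ((⌈(n:ℝ)^α⌉₊ : ℝ)) ≤ (n:ℝ)^α + 1 := by
        have := Nat.ceil_lt_add_one (by positivity : (0:ℝ) ≤ (n:ℝ)^α)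
        linarith
      calc ((⌈(n:ℝ)^α⌉₊ : ℝ)) / n ≤ ((n:ℝ)^α + 1) / n := by gcongr
      _ = (n:ℝ)^(α-1) + (n:ℝ)⁻¹ := by
          rw [Real.rpow_sub hn0, Real.rpow_one]
          ring
  set C : ℝ := 2 * β ^ 2 + 2 * σ ^ 2 with hC
  set A : ℕ → ℝ :=
    fun n => ∫ x, min (x^2) ((lam n)^2) ∂(gaussianReal β ⟨σ^2, sq_nonneg σ⟩) with hA
  set B : ℕ → ℝ :=
    fun n => ∫ x, min (x^2) ((lam n)^2) ∂(gaussianReal 0 ⟨σ^2, sq_nonneg σ⟩) with hB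
  have hA0 : ∀ n, 0 ≤ A n := fun n =>
    integral_nonneg fun x => le_min (sq_nonneg _) (sq_nonneg _)
  have hAC : ∀ n, A n ≤ C := fun n => myAux_integral_min_le hσ β (lam n)
  have t1 : Tendsto (fun n : ℕ => ((⌈(n:ℝ)^α⌉₊ : ℝ)/n) * A n) atTop (𝓝 0) := by
    have hup := hk0.mul_const C
    rw [zero_mul] at hup
    refine tendsto_of_tendsto_of_tendsto_of_le_of_le' tendsto_const_nhds hup ?_ ?_
    · exact Filter.Eventually.of_forall fun n =>
        mul_nonneg (by positivity) (hA0 n)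
    · exact Filter.Eventually.of_forall fun n =>
        mul_le_mul_of_nonneg_left (hAC n) (by positivity)
  have t2 : Tendsto (fun n : ℕ => (1 - (⌈(n:ℝ)^α⌉₊ : ℝ)/n) * B n)
      atTop (𝓝 ((1 - 0) * σ^2)) :=
    (tendsto_const_nhds.sub hk0).mul (myAux_tendsto_G0 hσ lam hlam)
  have tot := t1.add t2
  rw [zero_add, sub_zero, one_mul] at tot
  refine Tendsto.congr' ?_ tot
  filter_upwards [eventually_ge_atTop 1] with n hn
  exact (myAux_expectation_eq β σ α (lam n) n hn (hkn n hn)).symm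
end

section
/- For Y ~ N(β, σ²) and threshold λ ≥ 0, the soft-thresholding risk satisfies the Stein identity r_S(λ, β) = E[σ² − 2σ²·1{|Y| ≤ λ} + min{Y², λ²}], where r_S(λ, β) = E[(S(Y, λ) − β)²]. -/
open MeasureTheory ProbabilityTheory Real Filter Set Asymptotics
open scoped NNReal ENNReal

/-- Soft thresholding operator. -/
noncomputable def softThresh (y lam : ℝ) : ℝ := Real.sign y * max (|y| - lam) 0

-- conversion lemma
lemma integral_gaussianReal_eq (β : ℝ) (v : ℝ≥0) (hv : v ≠ 0) (g : ℝ → ℝ) :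
    ∫ y, g y ∂(gaussianReal β v) = ∫ y, g y * gaussianPDFReal β v y := by
  rw [gaussianReal_of_var_ne_zero β hv]
  have h : gaussianPDF β v = fun x => ((Real.toNNReal (gaussianPDFReal β v x) : ℝ≥0) : ℝ≥0∞) := rfl
  rw [h, integral_withDensity_eq_integral_smul ((measurable_gaussianPDFReal β v).real_toNNReal) g]
  congr 1; ext y
  simp [NNReal.smul_def, Real.coe_toNNReal _ (gaussianPDFReal_nonneg β v y), mul_comm]

-- x^2 * exp integrable
lemma int_sq_exp {b : ℝ} (hb : 0 < b) : Integrable fun x : ℝ => x^2 * rexp (-b * x^2) := by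
  have h := (integrable_exp_neg_mul_sq (half_pos hb)).const_mul (2/b)
  refine h.mono' ?_ ?_
  · exact (Continuous.mul (by continuity) (by continuity)).aestronglyMeasurable
  · refine Filter.Eventually.of_forall fun x => ?_
    have hx : (0:ℝ) ≤ x^2 * rexp (-b * x^2) := by positivity
    rw [Real.norm_eq_abs, abs_of_nonneg hx]
    have h1 : (1 : ℝ) + b/2*x^2 ≤ rexp (b/2*x^2) := by
      linarith [Real.add_one_le_exp (b/2*x^2)]
    have h2 : x^2 ≤ 2/b * rexp (b/2*x^2) := by
      rw [div_mul_eq_mul_div, le_div_iff₀ hb]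
      nlinarith
    have h3 := mul_le_mul_of_nonneg_right h2 (Real.exp_pos (-b*x^2)).le
    calc x^2 * rexp (-b * x^2) ≤ 2/b * rexp (b/2*x^2) * rexp (-b*x^2) := h3
      _ = 2/b * rexp (-(b/2) * x^2) := by rw [mul_assoc, ← Real.exp_add]; ring_nf

lemma integrable_quad_exp (a c d : ℝ) {b : ℝ} (hb : 0 < b) :
    Integrable fun x : ℝ => (a*x^2 + c*x + d) * rexp (-b * x^2) := by
  have h1 : Integrable fun x : ℝ => x^2 * rexp (-b * x^2) := int_sq_exp hb
  have h2 := integrable_mul_exp_neg_mul_sq hb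
  have h3 := integrable_exp_neg_mul_sq hb
  have h := ((h1.const_mul a).add (h2.const_mul c)).add (h3.const_mul d)
  refine h.congr (Filter.Eventually.of_forall fun x => ?_)
  simp only [Pi.add_apply]; ring

lemma integrable_quad_gauss (β σ a c d : ℝ) (hσ : 0 < σ) :
    Integrable fun y : ℝ => (a*y^2 + c*y + d) * rexp (-(y-β)^2 / (2*σ^2)) := by
  have hb : 0 < (2*σ^2)⁻¹ := by positivity
  have h0 : Integrable fun x : ℝ =>
      (a*x^2 + (2*a*β+c)*x + (a*β^2+c*β+d)) * rexp (-(2*σ^2)⁻¹ * x^2) :=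
    integrable_quad_exp _ _ _ hb
  have h1 := h0.comp_sub_right β
  refine h1.congr (Filter.Eventually.of_forall fun y => ?_)
  simp only []
  rw [show -(2*σ^2)⁻¹ * (y-β)^2 = -(y-β)^2 / (2*σ^2) by ring]
  ring

lemma hasDerivAt_lin_gauss (β σ p q : ℝ) (hσ : 0 < σ) (y : ℝ) :
    HasDerivAt (fun y : ℝ => (p*y+q) * ((Real.sqrt (2*π*σ^2))⁻¹ * rexp (-(y-β)^2 / (2*σ^2))))
      ((p - (p*y+q)*(y-β)/σ^2) * ((Real.sqrt (2*π*σ^2))⁻¹ * rexp (-(y-β)^2 / (2*σ^2)))) y := by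
  have hσ2 : σ^2 ≠ 0 := by positivity
  have h1 : HasDerivAt (fun y : ℝ => -(y-β)^2 / (2*σ^2)) (-(y-β)/σ^2) y := by
    have h := (((hasDerivAt_id y).sub_const β).pow 2).neg.div_const (2*σ^2)
    refine h.congr_deriv ?_
    simp only [id_eq]
    field_simp
    ring
  have h2 := (h1.exp.const_mul ((Real.sqrt (2*π*σ^2))⁻¹))
  have h3 : HasDerivAt (fun y : ℝ => p*y+q) p y := by
    simpa using ((hasDerivAt_id y).const_mul p).add_const q
  have h4 := h3.mul h2
  refine h4.congr_deriv ?_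
  field_simp
  ring

set_option maxHeartbeats 1000000 in
lemma tendsto_lin_exp_base (p q : ℝ) {b : ℝ} (hb : 0 < b) :
    Tendsto (fun x : ℝ => (p*x+q) * rexp (-b * x^2)) atTop (nhds 0) := by
  have h0 : Tendsto (fun x : ℝ => rexp (-b * x^2)) atTop (nhds 0) := by
    have h : Tendsto (fun x : ℝ => -b * x^2) atTop atBot :=
      (tendsto_neg_atTop_atBot.comp ((tendsto_pow_atTop two_ne_zero).const_mul_atTop hb)).congr
        fun x => by simp [Function.comp, neg_mul]
    exact (Real.tendsto_exp_atBot.comp h).congr fun x => rfl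
  have h1 : Tendsto (fun x : ℝ => x * rexp (-b * x^2)) atTop (nhds 0) := by
    have ho := rpow_mul_exp_neg_mul_sq_isLittleO_exp_neg hb 1
    have hl : Tendsto (fun x : ℝ => -(1/2 : ℝ) * x) atTop atBot := by
      have h2 : Tendsto (fun x : ℝ => (1/2 : ℝ) * x) atTop atTop :=
        tendsto_id.const_mul_atTop (by norm_num)
      exact (tendsto_neg_atTop_atBot.comp h2).congr fun x => by
        simp only [Function.comp]; ring
    have ht : Tendsto (fun x : ℝ => rexp (-(1/2 : ℝ) * x)) atTop (nhds 0) :=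
      (Real.tendsto_exp_atBot.comp hl).congr fun x => rfl
    have h2 := ho.isBigO.trans_tendsto ht
    exact h2.congr fun x => by rw [Real.rpow_one]
  have h3 := (h1.const_mul p).add (h0.const_mul q)
  have h4 : Tendsto (fun x : ℝ => (p*x+q) * rexp (-b * x^2)) atTop (nhds (p*0+q*0)) :=
    h3.congr fun x => by ring
  simpa using h4

lemma tendsto_lin_gauss_atTop (β σ p q : ℝ) (hσ : 0 < σ) :
    Tendsto (fun y : ℝ => (p*y+q) * ((Real.sqrt (2*π*σ^2))⁻¹ * rexp (-(y-β)^2 / (2*σ^2))))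
      atTop (nhds 0) := by
  have hb : 0 < (2*σ^2)⁻¹ := by positivity
  have h0 := tendsto_lin_exp_base (p * (Real.sqrt (2*π*σ^2))⁻¹)
    ((p*β+q) * (Real.sqrt (2*π*σ^2))⁻¹) hb
  have hshift : Tendsto (fun y : ℝ => y - β) atTop atTop :=
    tendsto_atTop_add_const_right atTop (-β) tendsto_id
  have h1 := h0.comp hshift
  refine h1.congr fun y => ?_
  simp only [Function.comp]
  rw [show -(2*σ^2)⁻¹ * (y-β)^2 = -(y-β)^2/(2*σ^2) by ring]
  ring

lemma tendsto_lin_gauss_atBot (β σ p q : ℝ) (hσ : 0 < σ) :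
    Tendsto (fun y : ℝ => (p*y+q) * ((Real.sqrt (2*π*σ^2))⁻¹ * rexp (-(y-β)^2 / (2*σ^2))))
      atBot (nhds 0) := by
  have h0 := tendsto_lin_gauss_atTop (-β) σ (-p) q hσ
  have h1 := h0.comp (tendsto_neg_atBot_atTop (G := ℝ))
  refine h1.congr fun y => ?_
  simp only [Function.comp]
  rw [show -(-y - -β)^2/(2*σ^2) = -(y-β)^2/(2*σ^2) by ring]
  ring

lemma softThresh_eq {lam : ℝ} (hlam : 0 ≤ lam) (y : ℝ) :
    softThresh y lam = y - max (min y lam) (-lam) := by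
  rcases lt_trichotomy y 0 with h|h|h
  · rw [softThresh, Real.sign_of_neg h, abs_of_neg h, min_eq_left (by linarith)]
    rcases le_total y (-lam) with h2|h2
    · rw [max_eq_right h2, max_eq_left (by linarith)]; ring
    · rw [max_eq_left h2, max_eq_right (by linarith)]; ring
  · subst h
    rw [softThresh, Real.sign_zero, min_eq_left hlam, max_eq_left (neg_nonpos.mpr hlam)]
    ring
  · rw [softThresh, Real.sign_of_pos h, abs_of_pos h]
    rcases le_total y lam with h2|h2
    · rw [min_eq_left h2, max_eq_right (by linarith : y - lam ≤ 0),
        max_eq_left (by linarith : -lam ≤ y)]; ring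
    · rw [min_eq_right h2, max_eq_left (by linarith : (0:ℝ) ≤ y - lam),
        max_eq_left (by linarith : -lam ≤ lam)]; ring

lemma integrable_quad_f (β σ a c d : ℝ) (hσ : 0 < σ) :
    Integrable fun y : ℝ =>
      (a*y^2+c*y+d) * ((Real.sqrt (2*π*σ^2))⁻¹ * rexp (-(y-β)^2/(2*σ^2))) := by
  have h := (integrable_quad_gauss β σ a c d hσ).const_mul ((Real.sqrt (2*π*σ^2))⁻¹)
  exact h.congr (Filter.Eventually.of_forall fun y => by ring)

set_option maxHeartbeats 1000000 in
/-- Stein identity for the soft-thresholding risk: for `Y ~ N(β, σ²)` and `λ ≥ 0`,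
`r_S(λ, β) = E[σ² − 2σ²·1{|Y| ≤ λ} + min{Y², λ²}]`. -/
theorem softRisk_stein_identity (β σ lam : ℝ) (hσ : 0 < σ) (hlam : 0 ≤ lam) :
    ∫ y, (softThresh y lam - β)^2 ∂(gaussianReal β ⟨σ^2, sq_nonneg σ⟩)
      = ∫ y, (σ^2 - 2 * σ^2 * (if |y| ≤ lam then (1 : ℝ) else 0)
          + min (y^2) (lam^2)) ∂(gaussianReal β ⟨σ^2, sq_nonneg σ⟩) := by
  have hσ2 : σ^2 ≠ 0 := by positivity
  have hv : (⟨σ^2, sq_nonneg σ⟩ : ℝ≥0) ≠ 0 := by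
    intro h
    exact hσ2 (congrArg NNReal.toReal h)
  rw [integral_gaussianReal_eq β _ hv, integral_gaussianReal_eq β _ hv]
  set g : ℝ → ℝ := fun y => (Real.sqrt (2*π*σ^2))⁻¹ * rexp (-(y-β)^2/(2*σ^2)) with hg
  have hpdf : ∀ y, gaussianPDFReal β ⟨σ^2, sq_nonneg σ⟩ y = g y := fun y => rfl
  simp_rw [hpdf, softThresh_eq hlam]
  set A : ℝ → ℝ := fun y => (y - max (min y lam) (-lam) - β)^2 with hA
  set B : ℝ → ℝ := fun y =>
    σ^2 - 2*σ^2*(if |y| ≤ lam then (1:ℝ) else 0) + min (y^2) (lam^2) with hB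
  show (∫ y, A y * g y) = ∫ y, B y * g y
  have hgpos : ∀ y, 0 ≤ g y := fun y => by
    have := Real.sqrt_nonneg (2*π*σ^2); positivity
  have hgcont : Continuous g := by
    apply Continuous.mul continuous_const
    exact Real.continuous_exp.comp
      (((continuous_id.sub continuous_const).pow 2).neg.div_const _)
  -- integrability of the two integrands
  have hIA : Integrable (fun y => A y * g y) := by
    refine (integrable_quad_f β σ 2 0 (2*(lam+|β|)^2) hσ).mono' ?_ ?_
    · have hAc : Continuous A :=
        ((continuous_id.sub ((continuous_id.min continuous_const).max
          continuous_const)).sub continuous_const).pow 2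
      exact (hAc.mul hgcont).aestronglyMeasurable
    · refine Eventually.of_forall fun y => ?_
      rw [Real.norm_eq_abs, abs_mul, abs_of_nonneg (hgpos y), abs_of_nonneg (sq_nonneg _)]
      have hclamp : |max (min y lam) (-lam)| ≤ lam :=
        abs_le.mpr ⟨le_max_right _ _, max_le (min_le_right _ _) (by linarith)⟩
      have h1 : |y - max (min y lam) (-lam) - β| ≤ |y| + (lam + |β|) := by
        have h2 := abs_sub (y - max (min y lam) (-lam)) β
        have h3 := abs_sub y (max (min y lam) (-lam))
        calc |y - max (min y lam) (-lam) - β|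
            ≤ |y - max (min y lam) (-lam)| + |β| := abs_sub _ _
          _ ≤ (|y| + |max (min y lam) (-lam)|) + |β| := by linarith [abs_sub y (max (min y lam) (-lam))]
          _ ≤ |y| + (lam + |β|) := by linarith
      have h2 : A y ≤ (|y| + (lam+|β|))^2 := by
        rw [hA]
        exact sq_le_sq' (by linarith [(abs_le.mp h1).1]) (abs_le.mp h1).2
      have h3 : (|y| + (lam+|β|))^2 ≤ 2*y^2 + 0*y + 2*(lam+|β|)^2 := by
        nlinarith [sq_abs y, sq_nonneg (|y| - (lam+|β|))]
      exact mul_le_mul_of_nonneg_right (h2.trans h3) (hgpos y)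
  have hIB : Integrable (fun y => B y * g y) := by
    refine (integrable_quad_f β σ 0 0 (3*σ^2 + lam^2) hσ).mono' ?_ ?_
    · have hBm : Measurable B := by
        refine Measurable.add (Measurable.sub measurable_const (Measurable.const_mul ?_ _)) ?_
        · exact Measurable.ite (isClosed_le continuous_abs continuous_const).measurableSet
            measurable_const measurable_const
        · exact (measurable_id.pow_const 2).min measurable_const
      exact (hBm.mul hgcont.measurable).aestronglyMeasurable
    · refine Eventually.of_forall fun y => ?_
      rw [Real.norm_eq_abs, abs_mul, abs_of_nonneg (hgpos y)]
      have h0 : 0 ≤ min (y^2) (lam^2) := le_min (sq_nonneg _) (sq_nonneg _)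
      have h1 : min (y^2) (lam^2) ≤ lam^2 := min_le_right _ _
      have hb : |B y| ≤ 0*y^2 + 0*y + (3*σ^2+lam^2) := by
        simp only [hB, abs_le]
        refine ⟨?_, ?_⟩ <;> split_ifs <;> nlinarith [sq_nonneg σ, sq_nonneg lam]
      exact mul_le_mul_of_nonneg_right hb (hgpos y)
  rw [← sub_eq_zero, ← integral_sub hIA hIB]
  set D : ℝ → ℝ := fun y => A y * g y - B y * g y with hD
  have hID : Integrable D := hIA.sub hIB
  have hll : -lam ≤ lam := by linarith
  -- left piece
  have hIic : ∫ x in Iic (-lam), D x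
      = ((-σ^2)*(-lam) + σ^2*(β-2*lam)) * g (-lam) - 0 := by
    apply integral_Iic_of_hasDerivAt_of_tendsto
      (f := fun y => ((-σ^2)*y + σ^2*(β-2*lam)) * g y)
    · exact (hasDerivAt_lin_gauss β σ (-σ^2) (σ^2*(β-2*lam)) hσ
        (-lam)).continuousAt.continuousWithinAt
    · intro x hx
      simp only [mem_Iio] at hx
      have h1 : max (min x lam) (-lam) = -lam := by
        rw [min_eq_left (by linarith), max_eq_right (by linarith)]
      have h2 : ¬(|x| ≤ lam) := by
        rw [abs_of_neg (by linarith : x < 0)]; push_neg; linarith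
      have h3 : min (x^2) (lam^2) = lam^2 := min_eq_right (by nlinarith)
      have hDx : D x = ((-σ^2) - ((-σ^2)*x + σ^2*(β-2*lam))*(x-β)/σ^2) * g x := by
        simp only [hD, hA, hB, h1, if_neg h2, h3]
        field_simp
        ring
      rw [hDx]
      exact hasDerivAt_lin_gauss β σ (-σ^2) (σ^2*(β-2*lam)) hσ x
    · exact hID.integrableOn
    · exact tendsto_lin_gauss_atBot β σ (-σ^2) (σ^2*(β-2*lam)) hσ
  -- right piece
  have hIoi : ∫ x in Ioi lam, D x
      = 0 - ((-σ^2)*lam + σ^2*(2*lam+β)) * g lam := by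
    apply integral_Ioi_of_hasDerivAt_of_tendsto
      (f := fun y => ((-σ^2)*y + σ^2*(2*lam+β)) * g y)
    · exact (hasDerivAt_lin_gauss β σ (-σ^2) (σ^2*(2*lam+β)) hσ
        lam).continuousAt.continuousWithinAt
    · intro x hx
      simp only [mem_Ioi] at hx
      have h1 : max (min x lam) (-lam) = lam := by
        rw [min_eq_right (by linarith), max_eq_left (by linarith)]
      have h2 : ¬(|x| ≤ lam) := by
        push_neg; exact lt_of_lt_of_le hx (le_abs_self x)
      have h3 : min (x^2) (lam^2) = lam^2 := min_eq_right (by nlinarith)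
      have hDx : D x = ((-σ^2) - ((-σ^2)*x + σ^2*(2*lam+β))*(x-β)/σ^2) * g x := by
        simp only [hD, hA, hB, h1, if_neg h2, h3]
        field_simp
        ring
      rw [hDx]
      exact hasDerivAt_lin_gauss β σ (-σ^2) (σ^2*(2*lam+β)) hσ x
    · exact hID.integrableOn
    · exact tendsto_lin_gauss_atTop β σ (-σ^2) (σ^2*(2*lam+β)) hσ
  -- middle piece
  have hmid : ∫ x in (-lam)..lam, D x
      = (σ^2*lam + σ^2*β) * g lam - (σ^2*(-lam) + σ^2*β) * g (-lam) := by
    apply intervalIntegral.integral_eq_sub_of_hasDerivAt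
      (f := fun y => (σ^2*y + σ^2*β) * g y)
    · intro x hx
      rw [uIcc_of_le hll] at hx
      have h1 : max (min x lam) (-lam) = x := by
        rw [min_eq_left hx.2, max_eq_left hx.1]
      have h2 : |x| ≤ lam := abs_le.mpr ⟨hx.1, hx.2⟩
      have h3 : min (x^2) (lam^2) = x^2 := min_eq_left (sq_le_sq' hx.1 hx.2)
      have hDx : D x = (σ^2 - (σ^2*x + σ^2*β)*(x-β)/σ^2) * g x := by
        simp only [hD, hA, hB, h1, if_pos h2, h3]
        field_simp
        ring
      rw [hDx]
      exact hasDerivAt_lin_gauss β σ (σ^2) (σ^2*β) hσ x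
    · exact hID.intervalIntegrable
  -- assemble
  have hsplit1 : ∫ y, D y = (∫ x in Iic (-lam), D x) + ∫ x in Ioi (-lam), D x :=
    (intervalIntegral.integral_Iic_add_Ioi hID.integrableOn hID.integrableOn).symm
  have hsplit2 : ∫ x in Ioi (-lam), D x
      = (∫ x in Ioc (-lam) lam, D x) + ∫ x in Ioi lam, D x := by
    rw [← Set.Ioc_union_Ioi_eq_Ioi hll,
      setIntegral_union (Set.Ioc_disjoint_Ioi le_rfl) measurableSet_Ioi
        hID.integrableOn hID.integrableOn]
  have hioc : ∫ x in Ioc (-lam) lam, D x = ∫ x in (-lam)..lam, D x :=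
    (intervalIntegral.integral_of_le hll).symm
  rw [hsplit1, hsplit2, hioc, hIic, hIoi, hmid]
  ring
end

section
/- For Y ~ N(β, σ²) and λ ≥ 0, E[min{Y², λ²}] − σ² ≤ r_S(λ, β), where r_S(λ, β) = E[(S(Y, λ) − β)²] is the soft-thresholding risk. -/
open MeasureTheory ProbabilityTheory

section aux
open Real

lemma clamp_lipschitz (lam a b : ℝ) :
    |max (min a lam) (-lam) - max (min b lam) (-lam)| ≤ |a - b| := by
  have h1 := abs_max_sub_max_le_abs (min a lam) (min b lam) (-lam)
  refine h1.trans ?_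
  simp only [min_def]
  split_ifs <;> simp_all [abs_le] <;> constructor <;> cases abs_le.1 (le_refl |a-b|) <;>
    linarith [le_abs_self (a-b), neg_abs_le (a-b)]

lemma soft_eq (lam : ℝ) (hlam : 0 ≤ lam) (y : ℝ) :
    softThresh y lam = y - max (min y lam) (-lam) := by
  unfold softThresh
  rcases lt_trichotomy y 0 with h | h | h
  · rw [Real.sign_of_neg h, abs_of_neg h]
    simp only [min_def, max_def]
    split_ifs <;> linarith
  · simp [h, Real.sign_zero, min_eq_left hlam, max_eq_left (neg_nonpos.2 hlam)]
  · rw [Real.sign_of_pos h, abs_of_pos h]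
    simp only [min_def, max_def]
    split_ifs <;> linarith

lemma clamp_sq (lam : ℝ) (hlam : 0 ≤ lam) (y : ℝ) :
    (max (min y lam) (-lam))^2 = min (y^2) (lam^2) := by
  simp only [min_def, max_def]
  split_ifs <;> nlinarith

lemma key (ν : Measure ℝ) [IsProbabilityMeasure ν] (g : ℝ → ℝ) (lam' : ℝ)
    (hgm : Measurable g) (hgb : ∀ x, |g x| ≤ lam')
    (hlip : ∀ x y, (g x - g y) * (x - y) ≤ (x - y)^2)
    (hi1 : Integrable (fun x => x) ν) (hi2 : Integrable (fun x : ℝ => x^2) ν)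
    (hm : ∫ x, x ∂ν = 0) :
    ∫ x, g x * x ∂ν ≤ ∫ x : ℝ, x^2 ∂ν := by
  set P := ν.prod ν with hP
  have hg : Integrable g ν := by
    refine Integrable.mono' (integrable_const lam') hgm.aestronglyMeasurable ?_
    exact ae_of_all _ fun x => by simpa using hgb x
  have hgx : Integrable (fun x => g x * x) ν :=
    hi1.bdd_mul hgm.aestronglyMeasurable (ae_of_all _ fun x => by simpa using hgb x)
  have I11 : Integrable (fun z : ℝ × ℝ => g z.1 * z.1) P := by
    simpa using hgx.mul_prod (integrable_const (1:ℝ))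
  have I22 : Integrable (fun z : ℝ × ℝ => g z.2 * z.2) P := by
    simpa using (integrable_const (1:ℝ)).mul_prod hgx
  have I12 : Integrable (fun z : ℝ × ℝ => g z.1 * z.2) P := hg.mul_prod hi1
  have I21 : Integrable (fun z : ℝ × ℝ => g z.2 * z.1) P := by
    have := hi1.mul_prod hg
    exact this.congr (ae_of_all _ fun z => mul_comm _ _)
  have Ix1 : Integrable (fun z : ℝ × ℝ => z.1^2) P := by
    simpa using hi2.mul_prod (integrable_const (1:ℝ))
  have Ix2 : Integrable (fun z : ℝ × ℝ => z.2^2) P := by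
    simpa using (integrable_const (1:ℝ)).mul_prod hi2
  have Ixy : Integrable (fun z : ℝ × ℝ => z.1 * z.2) P := hi1.mul_prod hi1
  have eL : (fun z : ℝ × ℝ => (g z.1 - g z.2) * (z.1 - z.2))
      = fun z => (g z.1 * z.1 + g z.2 * z.2) - (g z.1 * z.2 + g z.2 * z.1) := by
    funext z; ring
  have eR : (fun z : ℝ × ℝ => (z.1 - z.2)^2)
      = fun z => (z.1^2 + z.2^2) - (z.1 * z.2 + z.1 * z.2) := by
    funext z; ring
  have IL : Integrable (fun z : ℝ × ℝ => (g z.1 - g z.2) * (z.1 - z.2)) P := by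
    rw [eL]; exact (I11.add I22).sub (I12.add I21)
  have IR : Integrable (fun z : ℝ × ℝ => (z.1 - z.2)^2) P := by
    rw [eR]; exact (Ix1.add Ix2).sub (Ixy.add Ixy)
  have hmono : ∫ z, (g z.1 - g z.2) * (z.1 - z.2) ∂P ≤ ∫ z, (z.1 - z.2)^2 ∂P :=
    integral_mono IL IR fun z => hlip z.1 z.2
  have c11 : ∫ z : ℝ × ℝ, g z.1 * z.1 ∂P = ∫ x, g x * x ∂ν := by
    have := integral_prod_mul (μ := ν) (ν := ν) (fun x => g x * x) (fun _ => (1:ℝ))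
    simpa using this
  have c22 : ∫ z : ℝ × ℝ, g z.2 * z.2 ∂P = ∫ x, g x * x ∂ν := by
    have := integral_prod_mul (μ := ν) (ν := ν) (fun _ => (1:ℝ)) (fun x => g x * x)
    simpa using this
  have c12 : ∫ z : ℝ × ℝ, g z.1 * z.2 ∂P = 0 := by
    rw [integral_prod_mul (μ := ν) (ν := ν) g (fun x => x), hm, mul_zero]
  have c21 : ∫ z : ℝ × ℝ, g z.2 * z.1 ∂P = 0 := by
    have := integral_prod_mul (μ := ν) (ν := ν) (fun x => x) g
    rw [show (fun z : ℝ × ℝ => g z.2 * z.1) = fun z : ℝ × ℝ => z.1 * g z.2 by funext z; ring,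
      this, hm, zero_mul]
  have cx1 : ∫ z : ℝ × ℝ, z.1^2 ∂P = ∫ x : ℝ, x^2 ∂ν := by
    have := integral_prod_mul (μ := ν) (ν := ν) (fun x : ℝ => x^2) (fun _ => (1:ℝ))
    simpa using this
  have cx2 : ∫ z : ℝ × ℝ, z.2^2 ∂P = ∫ x : ℝ, x^2 ∂ν := by
    have := integral_prod_mul (μ := ν) (ν := ν) (fun _ => (1:ℝ)) (fun x : ℝ => x^2)
    simpa using this
  have cxy : ∫ z : ℝ × ℝ, z.1 * z.2 ∂P = 0 := by
    rw [integral_prod_mul (μ := ν) (ν := ν) (fun x => x) (fun x => x), hm, mul_zero]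
  have IA : Integrable (fun z : ℝ × ℝ => g z.1 * z.1 + g z.2 * z.2) P := I11.add I22
  have IB : Integrable (fun z : ℝ × ℝ => g z.1 * z.2 + g z.2 * z.1) P := I12.add I21
  have IC : Integrable (fun z : ℝ × ℝ => z.1 ^ 2 + z.2 ^ 2) P := Ix1.add Ix2
  have ID : Integrable (fun z : ℝ × ℝ => z.1 * z.2 + z.1 * z.2) P := Ixy.add Ixy
  have hLval : ∫ z, (g z.1 - g z.2) * (z.1 - z.2) ∂P = 2 * ∫ x, g x * x ∂ν := by
    rw [eL, integral_sub IA IB, integral_add I11 I22,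
      integral_add I12 I21, c11, c22, c12, c21]; ring
  have hRval : ∫ z, (z.1 - z.2)^2 ∂P = 2 * ∫ x : ℝ, x^2 ∂ν := by
    rw [eR, integral_sub IC ID, integral_add Ix1 Ix2,
      integral_add Ixy Ixy, cx1, cx2, cxy]; ring
  rw [hLval, hRval] at hmono
  linarith

lemma pdf_eq {σ : ℝ} (hσ : 0 < σ) (x : ℝ) :
    gaussianPDFReal 0 ⟨σ^2, sq_nonneg σ⟩ x
      = (√(2 * π * σ^2))⁻¹ * Real.exp (-(2*σ^2)⁻¹ * x^2) := by
  unfold gaussianPDFReal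
  change (√(2 * π * σ^2))⁻¹ * Real.exp (-(x - 0) ^ 2 / (2 * σ^2)) = _
  congr 1
  apply congrArg
  field_simp
  ring

lemma int_weighted_iff {σ : ℝ} (hσ : 0 < σ) (f : ℝ → ℝ) :
    Integrable f (gaussianReal 0 ⟨σ^2, sq_nonneg σ⟩)
      ↔ Integrable (fun x => f x * gaussianPDFReal 0 ⟨σ^2, sq_nonneg σ⟩ x) volume := by
  have hv : (⟨σ^2, sq_nonneg σ⟩ : NNReal) ≠ 0 := by
    simp [← NNReal.coe_ne_zero, NNReal.coe_mk]
    positivity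
  rw [gaussianReal_of_var_ne_zero 0 hv]
  rw [integrable_withDensity_iff (measurable_gaussianPDF 0 (⟨σ^2, sq_nonneg σ⟩ : NNReal))
    (ae_of_all _ fun x => ENNReal.ofReal_lt_top)]
  simp only [gaussianPDF, ENNReal.toReal_ofReal (gaussianPDFReal_nonneg 0 (⟨σ^2, sq_nonneg σ⟩ : NNReal) _)]

lemma integral_weighted {σ : ℝ} (hσ : 0 < σ) (f : ℝ → ℝ) :
    ∫ x, f x ∂(gaussianReal 0 ⟨σ^2, sq_nonneg σ⟩)
      = ∫ x, gaussianPDFReal 0 ⟨σ^2, sq_nonneg σ⟩ x * f x := by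
  have hv : (⟨σ^2, sq_nonneg σ⟩ : NNReal) ≠ 0 := by
    simp [← NNReal.coe_ne_zero, NNReal.coe_mk]
    positivity
  rw [gaussianReal_of_var_ne_zero 0 hv]
  have hd : gaussianPDF 0 (⟨σ^2, sq_nonneg σ⟩ : NNReal)
      = fun x => ((gaussianPDFReal 0 (⟨σ^2, sq_nonneg σ⟩ : NNReal) x).toNNReal : ENNReal) := rfl
  rw [hd, integral_withDensity_eq_integral_smul
    (by exact (measurable_gaussianPDFReal 0 _).real_toNNReal) f]
  congr 1
  funext x
  simp [NNReal.smul_def, Real.coe_toNNReal _ (gaussianPDFReal_nonneg 0 (⟨σ^2, sq_nonneg σ⟩ : NNReal) x)]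

lemma odd_zero (b : ℝ) : ∫ x : ℝ, x * Real.exp (-b*x^2) = 0 := by
  have h := integral_neg_eq_self (fun x : ℝ => x * Real.exp (-b*x^2)) volume
  have e : (fun x : ℝ => (-x) * Real.exp (-b*(-x)^2)) = fun x : ℝ => -(x * Real.exp (-b*x^2)) := by
    funext x; rw [neg_sq]; ring
  rw [show (fun x : ℝ => -x * Real.exp (-b*(-x)^2)) = fun x : ℝ => -(x * Real.exp (-b*x^2)) from e,
    integral_neg] at h
  linarith

lemma rpow_two_eq (x : ℝ) : x ^ (2:ℝ) = x ^ (2:ℕ) := by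
  rw [show (2:ℝ) = ((2:ℕ):ℝ) by norm_num, Real.rpow_natCast]

lemma sq_exp_int {b : ℝ} (hb : 0 < b) :
    ∫ x : ℝ, x^2 * Real.exp (-b*x^2) = b ^ (-(3:ℝ)/2) * (√π/2) := by
  have h := integral_rpow_mul_exp_neg_mul_rpow (p:=2) (q:=2) two_pos (by norm_num) hb
  simp only [rpow_two_eq] at h
  have habs : ∫ x : ℝ, x^2 * Real.exp (-b*x^2)
      = 2 * ∫ x in Set.Ioi (0:ℝ), x^2 * Real.exp (-b*x^2) := by
    rw [← integral_comp_abs (f := fun t => t^2 * Real.exp (-b*t^2))]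
    congr 1; funext x; rw [sq_abs]
  rw [habs, h, show ((2:ℝ)+1)/2 = 1/2 + 1 by norm_num,
    Real.Gamma_add_one (by norm_num : (1:ℝ)/2 ≠ 0), Real.Gamma_one_half_eq,
    show -((2:ℝ)+1)/2 = -(3:ℝ)/2 by norm_num]
  ring

lemma hb_pos {σ : ℝ} (hσ : 0 < σ) : 0 < (2*σ^2)⁻¹ := by positivity

lemma int_id_centered {σ : ℝ} (hσ : 0 < σ) :
    Integrable (fun x => x) (gaussianReal 0 ⟨σ^2, sq_nonneg σ⟩) := by
  rw [int_weighted_iff hσ]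
  have e : (fun x : ℝ => x * gaussianPDFReal 0 ⟨σ^2, sq_nonneg σ⟩ x)
      = fun x => (√(2 * π * σ^2))⁻¹ * (x * Real.exp (-(2*σ^2)⁻¹ * x^2)) := by
    funext x; rw [pdf_eq hσ]; ring
  rw [e]
  exact (integrable_mul_exp_neg_mul_sq (hb_pos hσ)).const_mul _

lemma int_sq_centered {σ : ℝ} (hσ : 0 < σ) :
    Integrable (fun x : ℝ => x^2) (gaussianReal 0 ⟨σ^2, sq_nonneg σ⟩) := by
  rw [int_weighted_iff hσ]
  have e : (fun x : ℝ => x^2 * gaussianPDFReal 0 ⟨σ^2, sq_nonneg σ⟩ x)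
      = fun x => (√(2 * π * σ^2))⁻¹ * (x^2 * Real.exp (-(2*σ^2)⁻¹ * x^2)) := by
    funext x; rw [pdf_eq hσ]; ring
  rw [e]
  have h := integrable_rpow_mul_exp_neg_mul_sq (hb_pos hσ) (s := 2) (by norm_num)
  simp only [rpow_two_eq] at h
  exact h.const_mul _

lemma mean_centered {σ : ℝ} (hσ : 0 < σ) :
    ∫ x, x ∂(gaussianReal 0 ⟨σ^2, sq_nonneg σ⟩) = 0 := by
  rw [integral_weighted hσ (fun x => x)]
  have e : (fun x : ℝ => gaussianPDFReal 0 ⟨σ^2, sq_nonneg σ⟩ x * x)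
      = fun x => (√(2 * π * σ^2))⁻¹ * (x * Real.exp (-(2*σ^2)⁻¹ * x^2)) := by
    funext x; rw [pdf_eq hσ]; ring
  rw [e, integral_const_mul, odd_zero, mul_zero]

lemma second_centered {σ : ℝ} (hσ : 0 < σ) :
    ∫ x : ℝ, x^2 ∂(gaussianReal 0 ⟨σ^2, sq_nonneg σ⟩) = σ^2 := by
  rw [integral_weighted hσ (fun x => x^2)]
  have e : (fun x : ℝ => gaussianPDFReal 0 ⟨σ^2, sq_nonneg σ⟩ x * x^2)
      = fun x => (√(2 * π * σ^2))⁻¹ * (x^2 * Real.exp (-(2*σ^2)⁻¹ * x^2)) := by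
    funext x; rw [pdf_eq hσ]; ring
  rw [e, integral_const_mul, sq_exp_int (hb_pos hσ)]
  set s := σ^2 with hs
  have hs0 : 0 < s := by positivity
  have h1 : ((2*s)⁻¹ : ℝ) ^ (-(3:ℝ)/2) = (2*s) ^ ((3:ℝ)/2) := by
    rw [Real.inv_rpow (by positivity), show (-(3:ℝ)/2) = -((3:ℝ)/2) by norm_num,
      Real.rpow_neg (by positivity), inv_inv]
  have h2 : ((2*s) : ℝ) ^ ((3:ℝ)/2) = (2*s) * √(2*s) := by
    rw [show ((3:ℝ)/2) = 1 + 1/2 by norm_num, Real.rpow_add (by positivity), Real.rpow_one,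
      Real.sqrt_eq_rpow]
  have h3 : √(2 * π * s) = √(2*s) * √π := by
    rw [show 2 * π * s = (2*s) * π by ring, Real.sqrt_mul (by positivity)]
  rw [h1, h2, h3]
  have hps : (0:ℝ) < √π := Real.sqrt_pos.2 Real.pi_pos
  have hss : (0:ℝ) < √(2*s) := Real.sqrt_pos.2 (by positivity)
  have hsq : √(2*s) * √(2*s) = 2*s := Real.mul_self_sqrt (by positivity)
  field_simp

lemma aux_centered (β σ lam : ℝ) (hσ : 0 < σ) (hlam : 0 ≤ lam) :
    (∫ x, (max (min (x+β) lam) (-lam))^2 ∂(gaussianReal 0 ⟨σ^2, sq_nonneg σ⟩)) - σ^2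
      ≤ ∫ x, (x - max (min (x+β) lam) (-lam))^2 ∂(gaussianReal 0 ⟨σ^2, sq_nonneg σ⟩) := by
  set ν := gaussianReal 0 (⟨σ^2, sq_nonneg σ⟩ : NNReal) with hν
  set g : ℝ → ℝ := fun x => max (min (x+β) lam) (-lam) with hgdef
  show (∫ x, (g x)^2 ∂ν) - σ^2 ≤ ∫ x, (x - g x)^2 ∂ν
  have hcont : Continuous g := ((continuous_id.add continuous_const).min continuous_const).max
    continuous_const
  have hgm : Measurable g := hcont.measurable
  have hgb : ∀ x, |g x| ≤ lam := by
    intro x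
    rw [abs_le]
    exact ⟨le_max_right _ _, max_le (min_le_right _ _) (by linarith)⟩
  have hlip : ∀ x y, (g x - g y) * (x - y) ≤ (x - y)^2 := by
    intro x y
    have h' : |g x - g y| ≤ |x - y| := by
      have := clamp_lipschitz lam (x+β) (y+β)
      rwa [show (x+β) - (y+β) = x - y by ring] at this
    calc (g x - g y) * (x - y) ≤ |(g x - g y) * (x - y)| := le_abs_self _
      _ = |g x - g y| * |x - y| := abs_mul _ _
      _ ≤ |x - y| * |x - y| := mul_le_mul_of_nonneg_right h' (abs_nonneg _)
      _ = (x - y)^2 := by rw [← abs_mul, abs_mul_self]; ring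
  have hi1 : Integrable (fun x => x) ν := int_id_centered hσ
  have hi2 : Integrable (fun x : ℝ => x^2) ν := int_sq_centered hσ
  haveI : IsProbabilityMeasure ν := instIsProbabilityMeasureGaussianReal _ _
  have hkey : ∫ x, g x * x ∂ν ≤ ∫ x : ℝ, x^2 ∂ν :=
    key ν g lam hgm hgb hlip hi1 hi2 (mean_centered hσ)
  have Ig2 : Integrable (fun x => (g x)^2) ν := by
    refine Integrable.mono' (integrable_const (lam^2)) (hgm.pow_const 2).aestronglyMeasurable ?_
    refine ae_of_all _ fun x => ?_
    rw [Real.norm_eq_abs, abs_of_nonneg (sq_nonneg _)]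
    nlinarith [hgb x, abs_nonneg (g x), sq_abs (g x)]
  have Igx : Integrable (fun x => g x * x) ν :=
    hi1.bdd_mul hgm.aestronglyMeasurable (ae_of_all _ fun x => by simpa using hgb x)
  have eq1 : (fun x => (x - g x)^2) = fun x => (x^2 + (g x)^2) - 2 * (g x * x) := by
    funext x; ring
  have hint : Integrable (fun x : ℝ => x^2 + (g x)^2) ν := hi2.add Ig2
  have hint2 : Integrable (fun x : ℝ => 2 * (g x * x)) ν := Igx.const_mul 2
  have h2 : ∫ x, (x - g x)^2 ∂ν
      = (∫ x : ℝ, x^2 ∂ν) + (∫ x, (g x)^2 ∂ν) - 2 * ∫ x, g x * x ∂ν := by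
    rw [eq1, integral_sub hint hint2, integral_add hi2 Ig2, integral_const_mul]
  have hsec : ∫ x : ℝ, x^2 ∂ν = σ^2 := second_centered hσ
  rw [h2]
  linarith [hkey, hsec]

end aux

/-- For `Y ~ N(β, σ²)` and `λ ≥ 0`, `E[min{Y², λ²}] − σ² ≤ r_S(λ, β)`,
where `r_S(λ, β) = E[(S(Y, λ) − β)²]` is the soft-thresholding risk. -/
theorem truncated_second_moment_bias_le_softRisk
    (β σ lam : ℝ) (hσ : 0 < σ) (hlam : 0 ≤ lam) :
    (∫ y, min (y^2) (lam^2) ∂(gaussianReal β ⟨σ^2, sq_nonneg σ⟩)) - σ^2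
      ≤ ∫ y, (softThresh y lam - β)^2 ∂(gaussianReal β ⟨σ^2, sq_nonneg σ⟩) := by
  have hmap : gaussianReal β (⟨σ^2, sq_nonneg σ⟩ : NNReal)
      = (gaussianReal 0 (⟨σ^2, sq_nonneg σ⟩ : NNReal)).map (fun x => x + β) := by
    rw [gaussianReal_map_add_const (μ := 0) (v := (⟨σ^2, sq_nonneg σ⟩ : NNReal)) β, zero_add]
  have haem : AEMeasurable (fun x : ℝ => x + β) (gaussianReal 0 (⟨σ^2, sq_nonneg σ⟩ : NNReal)) :=
    (measurable_id.add_const β).aemeasurable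
  have hL : ∫ y, min (y^2) (lam^2) ∂(gaussianReal β ⟨σ^2, sq_nonneg σ⟩)
      = ∫ x, (max (min (x+β) lam) (-lam))^2 ∂(gaussianReal 0 ⟨σ^2, sq_nonneg σ⟩) := by
    rw [hmap, integral_map haem
      ((by continuity : Continuous fun y : ℝ => min (y^2) (lam^2)).aestronglyMeasurable)]
    congr 1
    funext x
    exact (clamp_sq lam hlam (x+β)).symm
  have hRfun : (fun y => (softThresh y lam - β)^2)
      = fun y => (y - max (min y lam) (-lam) - β)^2 :=
    funext fun y => by rw [soft_eq lam hlam y]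
  have hR : ∫ y, (softThresh y lam - β)^2 ∂(gaussianReal β ⟨σ^2, sq_nonneg σ⟩)
      = ∫ x, (x - max (min (x+β) lam) (-lam))^2 ∂(gaussianReal 0 ⟨σ^2, sq_nonneg σ⟩) := by
    rw [hRfun, hmap, integral_map haem
      ((by continuity :
        Continuous fun y : ℝ => (y - max (min y lam) (-lam) - β)^2).aestronglyMeasurable)]
    congr 1
    funext x
    ring
  rw [hL, hR]
  exact aux_centered β σ lam hσ hlam
end

section
/- Under the orthogonal sparsity model with λₙ → ∞, n·Var[σ̃²ₙ] → 2σ⁴, where σ̃²ₙ = (1/n)·Σᵢ min{Yᵢ², λₙ²}. -/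
open MeasureTheory ProbabilityTheory Filter Finset

open Real
open scoped NNReal ENNReal


lemma integral_even_eq (f : ℝ → ℝ) (hf : Integrable f) (he : ∀ x, f (-x) = f x) :
    ∫ x, f x = 2 * ∫ x in Set.Ioi (0:ℝ), f x := by
  have h := integral_add_compl (measurableSet_Ioi (a := (0:ℝ))) hf
  rw [Set.compl_Ioi] at h
  have h2 : ∫ x in Set.Iic (0:ℝ), f x = ∫ x in Set.Ioi (0:ℝ), f x := by
    have := integral_comp_neg_Ioi (0:ℝ) f
    rw [neg_zero] at this
    rw [← this]
    exact integral_congr_ae (Filter.Eventually.of_forall fun x => he x)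
  rw [← h, h2]; ring

lemma integrable_pow_exp (b : ℝ) (hb : 0 < b) (k : ℕ) :
    Integrable (fun x : ℝ => x ^ k * rexp (-b * x^2)) := by
  have := integrable_rpow_mul_exp_neg_mul_sq hb (s := (k : ℝ))
    (lt_of_lt_of_le (by norm_num) (Nat.cast_nonneg k))
  refine this.congr (Filter.Eventually.of_forall fun x => ?_)
  simp only [Real.rpow_natCast]

lemma integral_pow_exp (b : ℝ) (hb : 0 < b) (k : ℕ) :
    ∫ x : ℝ, (x:ℝ) ^ (2*k) * rexp (-b * x^2)
      = b ^ (-(((2*k:ℕ):ℝ) + 1) / 2) * Real.Gamma ((((2*k:ℕ):ℝ) + 1)/2) := by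
  rw [integral_even_eq _ (integrable_pow_exp b hb (2*k))
    (by intro x; rw [show (-x)^(2*k) = x^(2*k) by rw [pow_mul, pow_mul, neg_sq], neg_sq])]
  have h := integral_rpow_mul_exp_neg_mul_rpow (p := 2) (q := ((2*k:ℕ):ℝ)) (b := b)
    (by norm_num) (lt_of_lt_of_le (by norm_num) (Nat.cast_nonneg _)) hb
  have heq : ∀ x : ℝ, x ^ (((2*k:ℕ):ℝ)) * rexp (-b * x ^ (2:ℝ)) = x ^ (2*k) * rexp (-b * x^2) := by
    intro x
    rw [Real.rpow_natCast, show (2:ℝ) = ((2:ℕ):ℝ) by norm_num, Real.rpow_natCast]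
  rw [setIntegral_congr_fun measurableSet_Ioi (fun x _ => heq x)] at h
  rw [h]; ring

lemma integral_gaussianReal (m : ℝ) (v : ℝ≥0) (hv : v ≠ 0) (g : ℝ → ℝ) :
    ∫ x, g x ∂(gaussianReal m v) = ∫ x, gaussianPDFReal m v x * g x := by
  rw [gaussianReal_of_var_ne_zero m hv]
  have h : gaussianPDF m v = fun x => ((gaussianPDFReal m v x).toNNReal : ℝ≥0∞) := rfl
  rw [h, integral_withDensity_eq_integral_smul
    ((measurable_gaussianPDFReal m v).real_toNNReal) g]
  congr 1 with x
  simp [NNReal.smul_def, Real.coe_toNNReal _ (gaussianPDFReal_nonneg m v x)]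

lemma integrable_gaussianReal_iff (m : ℝ) (v : ℝ≥0) (hv : v ≠ 0) (g : ℝ → ℝ) :
    Integrable g (gaussianReal m v) ↔ Integrable (fun x => gaussianPDFReal m v x * g x) volume := by
  rw [gaussianReal_of_var_ne_zero m hv]
  have h : gaussianPDF m v = fun x => ((gaussianPDFReal m v x).toNNReal : ℝ≥0∞) := rfl
  rw [h, integrable_withDensity_iff_integrable_smul
    ((measurable_gaussianPDFReal m v).real_toNNReal)]
  apply integrable_congr
  filter_upwards with x
  simp [NNReal.smul_def, Real.coe_toNNReal _ (gaussianPDFReal_nonneg m v x)]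

lemma integral_even_pow_gaussian (v : ℝ≥0) (hv : v ≠ 0) (k : ℕ) :
    ∫ x, x ^ (2*k) ∂(gaussianReal 0 v)
      = (Real.sqrt (2 * Real.pi * v))⁻¹ * ((2*(v:ℝ)) ^ ((((2*k:ℕ):ℝ) + 1) / 2)
          * Real.Gamma ((((2*k:ℕ):ℝ) + 1)/2)) := by
  have hvpos : (0:ℝ) < v := by positivity
  have hs : (0:ℝ) < 2*(v:ℝ) := by linarith
  have hb : (0:ℝ) < (2*(v:ℝ))⁻¹ := by positivity
  rw [integral_gaussianReal 0 v hv]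
  have hpdf : ∀ x : ℝ, gaussianPDFReal 0 v x * x ^ (2*k)
      = (Real.sqrt (2 * Real.pi * v))⁻¹ * (x ^ (2*k) * rexp (-(2*(v:ℝ))⁻¹ * x^2)) := by
    intro x
    rw [gaussianPDFReal]
    have : -(x - 0)^2 / (2 * (v:ℝ)) = -(2*(v:ℝ))⁻¹ * x^2 := by
      rw [sub_zero]; field_simp
    rw [this]; ring
  simp_rw [hpdf]
  rw [integral_const_mul, integral_pow_exp _ hb k]
  congr 2
  rw [Real.inv_rpow hs.le, ← Real.rpow_neg hs.le, neg_div, neg_neg]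

lemma Gamma_three_halves : Real.Gamma (3/2) = Real.sqrt Real.pi / 2 := by
  have := Real.Gamma_add_one (s := 1/2) (by norm_num)
  rw [show (1:ℝ)/2 + 1 = 3/2 by norm_num, Real.Gamma_one_half_eq] at this
  rw [this]; ring

lemma Gamma_five_halves : Real.Gamma (5/2) = 3 * Real.sqrt Real.pi / 4 := by
  have := Real.Gamma_add_one (s := 3/2) (by norm_num)
  rw [show (3:ℝ)/2 + 1 = 5/2 by norm_num, Gamma_three_halves] at this
  rw [this]; ring

lemma rpow_half_sq {s : ℝ} (hs : 0 ≤ s) : s ^ ((1:ℝ)/2) * s ^ ((1:ℝ)/2) = s := by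
  rw [← Real.rpow_add' hs (by norm_num)]; norm_num

lemma integral_sq_gaussianReal (v : ℝ≥0) (hv : v ≠ 0) :
    ∫ x, x ^ 2 ∂(gaussianReal 0 v) = v := by
  have hvpos : (0:ℝ) < v := by positivity
  have hs : (0:ℝ) < 2*(v:ℝ) := by linarith
  have h := integral_even_pow_gaussian v hv 1
  norm_num at h
  have h1 : ((2:ℝ)*v) ^ ((3:ℝ)/2) = 2 * (v:ℝ) * (2*(v:ℝ)) ^ ((1:ℝ)/2) := by
    nth_rewrite 2 [show (2*(v:ℝ)) = (2*(v:ℝ)) ^ ((1:ℝ)) from (Real.rpow_one _).symm]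
    rw [← Real.rpow_add hs]; norm_num
  have h3 : (2*(v:ℝ)) ^ ((1:ℝ)/2) = Real.sqrt 2 * Real.sqrt v := by
    rw [← Real.sqrt_eq_rpow, Real.sqrt_mul (by norm_num)]
  rw [h, Gamma_three_halves, h1, h3]
  have e2 : Real.sqrt 2 ≠ 0 := by positivity
  have ep : Real.sqrt Real.pi ≠ 0 := by positivity
  have ev : Real.sqrt v ≠ 0 := by positivity
  field_simp

lemma integral_pow4_gaussianReal (v : ℝ≥0) (hv : v ≠ 0) :
    ∫ x, x ^ 4 ∂(gaussianReal 0 v) = 3 * (v:ℝ)^2 := by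
  have hvpos : (0:ℝ) < v := by positivity
  have hs : (0:ℝ) < 2*(v:ℝ) := by linarith
  have h := integral_even_pow_gaussian v hv 2
  norm_num at h
  have h1 : ((2:ℝ)*v) ^ ((5:ℝ)/2) = (2 * (v:ℝ))^2 * (2*(v:ℝ)) ^ ((1:ℝ)/2) := by
    have e : (2*(v:ℝ))^2 = (2*(v:ℝ)) ^ ((2:ℝ)) := by
      rw [← Real.rpow_natCast (2*(v:ℝ)) 2]; norm_num
    rw [e, ← Real.rpow_add hs]; norm_num
  have h3 : (2*(v:ℝ)) ^ ((1:ℝ)/2) = Real.sqrt 2 * Real.sqrt v := by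
    rw [← Real.sqrt_eq_rpow, Real.sqrt_mul (by norm_num)]
  rw [h, Gamma_five_halves, h1, h3]
  have e2 : Real.sqrt 2 ≠ 0 := by positivity
  have ep : Real.sqrt Real.pi ≠ 0 := by positivity
  have ev : Real.sqrt v ≠ 0 := by positivity
  field_simp
  ring

lemma integrable_pow_gaussianReal (m : ℝ) (v : ℝ≥0) (hv : v ≠ 0) (k : ℕ) :
    Integrable (fun x => x^k) (gaussianReal m v) := by
  rw [integrable_gaussianReal_iff m v hv]
  have hs : (0:ℝ) < 2*(v:ℝ) := by positivity
  have hb : (0:ℝ) < (2*(v:ℝ))⁻¹ := by positivity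
  set c : ℝ := (Real.sqrt (2 * Real.pi * v))⁻¹ with hc
  have hG : Integrable (fun y : ℝ => c * ((y+m)^k * rexp (-(2*(v:ℝ))⁻¹ * y^2))) volume := by
    have : (fun y : ℝ => c * ((y+m)^k * rexp (-(2*(v:ℝ))⁻¹ * y^2)))
        = fun y : ℝ => ∑ j ∈ Finset.range (k+1),
            (c * (m^(k-j) * (k.choose j))) * (y^j * rexp (-(2*(v:ℝ))⁻¹ * y^2)) := by
      funext y
      rw [add_pow, Finset.sum_mul, Finset.mul_sum]
      refine Finset.sum_congr rfl fun j _ => by ring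
    rw [this]
    exact integrable_finset_sum _ (fun j _ =>
      ((integrable_pow_exp _ hb j).const_mul _))
  have := hG.comp_sub_right m
  refine this.congr (Filter.Eventually.of_forall fun x => ?_)
  simp only [gaussianPDFReal, sub_add_cancel]
  rw [show -(x - m)^2 / (2*(v:ℝ)) = -(2*(v:ℝ))⁻¹ * (x-m)^2 by field_simp]
  ring

lemma measurable_minsq (L : ℝ) : Measurable (fun x : ℝ => min (x^2) L) :=
  (measurable_id.pow_const 2).min measurable_const

lemma minsq_nonneg (L : ℝ) (hL : 0 ≤ L) (x : ℝ) : 0 ≤ min (x^2) L :=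
  le_min (sq_nonneg x) hL

lemma memLp_minsq {Ω : Type*} [MeasurableSpace Ω] (μ : Measure Ω) [IsProbabilityMeasure μ]
    (X : Ω → ℝ) (hX : Measurable X) (L : ℝ) (p : ℝ≥0∞) :
    MemLp (fun ω => min ((X ω)^2) (L^2)) p μ := by
  refine MemLp.of_bound (((measurable_minsq (L^2)).comp hX).aestronglyMeasurable) (L^2)
    (Filter.Eventually.of_forall fun ω => ?_)
  rw [Real.norm_eq_abs, abs_of_nonneg (minsq_nonneg _ (sq_nonneg L) _)]
  exact min_le_right _ _

lemma variance_minsq_le (m : ℝ) (v : ℝ≥0) (hv : v ≠ 0) (L : ℝ) :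
    variance (fun x => min (x^2) (L^2)) (gaussianReal m v)
      ≤ ∫ x, x^4 ∂(gaussianReal m v) := by
  refine le_trans (variance_le_expectation_sq
    (((measurable_minsq (L^2))).aestronglyMeasurable)) ?_
  have h4 := integrable_pow_gaussianReal m v hv 4
  refine integral_mono ?_ h4 ?_
  · refine h4.mono' ((((measurable_minsq (L^2)).pow_const 2)).aestronglyMeasurable)
      (Filter.Eventually.of_forall fun x => ?_)
    rw [Pi.pow_apply, Real.norm_eq_abs, abs_of_nonneg (by positivity)]
    calc (min (x^2) (L^2))^2 ≤ (x^2)^2 :=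
          pow_le_pow_left₀ (minsq_nonneg _ (sq_nonneg L) x) (min_le_left _ _) 2
    _ = x^4 := by ring
  · intro x
    rw [Pi.pow_apply]
    calc (min (x^2) (L^2))^2 ≤ (x^2)^2 :=
          pow_le_pow_left₀ (minsq_nonneg _ (sq_nonneg L) x) (min_le_left _ _) 2
    _ = x^4 := by ring

lemma tendsto_minsq_pointwise (lam : ℕ → ℝ) (hlam : Filter.Tendsto lam Filter.atTop Filter.atTop)
    (x : ℝ) (k : ℕ) :
    Filter.Tendsto (fun n => (min (x^2) ((lam n)^2))^k) Filter.atTop (nhds ((x^2)^k)) := by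
  refine Filter.Tendsto.congr' ?_ tendsto_const_nhds
  filter_upwards [hlam.eventually_ge_atTop |x|] with n hn
  have : x^2 ≤ (lam n)^2 := by
    calc x^2 = |x|^2 := (sq_abs x).symm
    _ ≤ (lam n)^2 := pow_le_pow_left₀ (abs_nonneg x) hn 2
  rw [min_eq_left this]

lemma tendsto_integral_minsq (v : ℝ≥0) (hv : v ≠ 0)
    (lam : ℕ → ℝ) (hlam : Filter.Tendsto lam Filter.atTop Filter.atTop) (k : ℕ) :
    Filter.Tendsto (fun n => ∫ x, (min (x^2) ((lam n)^2))^k ∂(gaussianReal 0 v))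
      Filter.atTop (nhds (∫ x, x^(2*k) ∂(gaussianReal 0 v))) := by
  refine MeasureTheory.tendsto_integral_of_dominated_convergence (fun x => x^(2*k))
    (fun n => (((measurable_minsq ((lam n)^2)).pow_const k)).aestronglyMeasurable)
    (integrable_pow_gaussianReal 0 v hv (2*k))
    (fun n => Filter.Eventually.of_forall fun x => ?_)
    (Filter.Eventually.of_forall fun x => ?_)
  · rw [Real.norm_eq_abs, abs_of_nonneg (by positivity)]
    calc (min (x^2) ((lam n)^2))^k ≤ (x^2)^k :=
      pow_le_pow_left₀ (minsq_nonneg _ (sq_nonneg _) x) (min_le_left _ _) k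
    _ = x^(2*k) := by rw [← pow_mul]
  · rw [show x^(2*k) = (x^2)^k by rw [← pow_mul]]
    exact tendsto_minsq_pointwise lam hlam x k

lemma tendsto_variance_minsq (v : ℝ≥0) (hv : v ≠ 0)
    (lam : ℕ → ℝ) (hlam : Filter.Tendsto lam Filter.atTop Filter.atTop) :
    Filter.Tendsto (fun n => variance (fun x => min (x^2) ((lam n)^2)) (gaussianReal 0 v))
      Filter.atTop (nhds (2 * (v:ℝ)^2)) := by
  have hvar : ∀ n, variance (fun x => min (x^2) ((lam n)^2)) (gaussianReal 0 v)
      = (∫ x, (min (x^2) ((lam n)^2))^2 ∂(gaussianReal 0 v))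
        - (∫ x, (min (x^2) ((lam n)^2))^1 ∂(gaussianReal 0 v))^2 := by
    intro n
    rw [variance_eq_sub (by simpa using memLp_minsq (gaussianReal 0 v) id measurable_id (lam n) 2)]
    simp [pow_one]
  simp_rw [hvar]
  have h2 := tendsto_integral_minsq v hv lam hlam 2
  have h1 := tendsto_integral_minsq v hv lam hlam 1
  rw [integral_pow4_gaussianReal v hv] at h2
  rw [show 2*1 = 2 from rfl, integral_sq_gaussianReal v hv] at h1
  have := h2.sub ((h1.pow 2))
  convert this using 2
  ring

lemma pi_map_eval {n : ℕ} (μs : Fin n → Measure ℝ) [∀ i, IsProbabilityMeasure (μs i)]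
    (i : Fin n) : (Measure.pi μs).map (Function.eval i) = μs i := by
  ext A hA
  rw [Measure.map_apply (measurable_pi_apply i) hA, Set.eval_preimage, Measure.pi_pi]
  have : (fun j => μs j (Function.update (fun _ => Set.univ) i A j))
      = Function.update (fun j => μs j Set.univ) i (μs i A) := by
    funext j
    rcases eq_or_ne j i with rfl | hj
    · simp
    · simp [Function.update_apply, hj]
  rw [this, Finset.prod_update_of_mem (Finset.mem_univ i)]
  simp

lemma indepFun_eval {n : ℕ} (μs : Fin n → Measure ℝ) [∀ i, IsProbabilityMeasure (μs i)]
    {i j : Fin n} (hij : i ≠ j) :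
    IndepFun (Function.eval i) (Function.eval j) (Measure.pi μs) := by
  rw [indepFun_iff_measure_inter_preimage_eq_mul]
  intro A B hA hB
  have hiA : Measure.pi μs (Function.eval i ⁻¹' A) = μs i A := by
    rw [← Measure.map_apply (measurable_pi_apply i) hA, pi_map_eval]
  have hjB : Measure.pi μs (Function.eval j ⁻¹' B) = μs j B := by
    rw [← Measure.map_apply (measurable_pi_apply j) hB, pi_map_eval]
  rw [hiA, hjB, Set.eval_preimage, Set.eval_preimage, ← Set.pi_inter_distrib, Measure.pi_pi]
  have : (fun k => μs k ((Function.update (fun _ => Set.univ) i A k) ∩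
        (Function.update (fun _ => Set.univ) j B k)))
      = Function.update (Function.update (fun k => μs k Set.univ) i (μs i A)) j (μs j B) := by
    funext k
    rcases eq_or_ne k i with rfl | hki
    · simp [Function.update_apply, hij, hij.symm]
    · rcases eq_or_ne k j with rfl | hkj
      · simp [Function.update_apply, hki]
      · simp [Function.update_apply, hki, hkj]
  rw [this, Finset.prod_update_of_mem (Finset.mem_univ j)]
  rw [Finset.prod_update_of_mem (by simp [hij] : i ∈ Finset.univ \ {j})]
  simp [mul_comm]

lemma variance_comp {Ω : Type*} [MeasurableSpace Ω] (μ : Measure Ω) [IsProbabilityMeasure μ]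
    {X : Ω → ℝ} (hX : Measurable X) {g : ℝ → ℝ} (hg : Measurable g)
    (hmem : MemLp g 2 (μ.map X)) :
    variance (fun ω => g (X ω)) μ = variance g (μ.map X) := by
  have : IsProbabilityMeasure (μ.map X) := Measure.isProbabilityMeasure_map hX.aemeasurable
  have hmem' : MemLp (g ∘ X) 2 μ :=
    (memLp_map_measure_iff hg.aestronglyMeasurable hX.aemeasurable).mp hmem
  rw [show (fun ω => g (X ω)) = g ∘ X from rfl, variance_eq_sub hmem', variance_eq_sub hmem]
  have h1 : ∫ y, g y ∂(μ.map X) = ∫ ω, g (X ω) ∂μ :=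
    integral_map hX.aemeasurable hg.aestronglyMeasurable
  have h2 : ∫ y, (g y)^2 ∂(μ.map X) = ∫ ω, (g (X ω))^2 ∂μ :=
    integral_map hX.aemeasurable ((hg.pow_const 2).aestronglyMeasurable)
  simp only [Pi.pow_apply, Function.comp_apply]
  rw [← h1, ← h2]

lemma variance_orthoModel (β σ α : ℝ) (hσ : 0 < σ) (L : ℝ) (n : ℕ) :
    variance (fun y : Fin n → ℝ => (1/(n:ℝ)) * ∑ i : Fin n, min ((y i)^2) (L^2))
        (orthoModel β σ α n)
      = (1/(n:ℝ))^2 * ∑ i : Fin n, variance (fun x : ℝ => min (x^2) (L^2))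
          (gaussianReal (if (i : ℕ) < ⌈(n : ℝ)^α⌉₊ then β else 0) ⟨σ^2, sq_nonneg σ⟩) := by
  set v : ℝ≥0 := ⟨σ^2, sq_nonneg σ⟩ with hvdef
  set μs : Fin n → Measure ℝ :=
    fun i => gaussianReal (if (i : ℕ) < ⌈(n : ℝ)^α⌉₊ then β else 0) v with hμs
  have hpi : orthoModel β σ α n = Measure.pi μs := rfl
  haveI : ∀ i, IsProbabilityMeasure (μs i) := fun i => by
    rw [hμs]; infer_instance
  haveI : IsProbabilityMeasure (orthoModel β σ α n) := by
    rw [hpi]; infer_instance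
  rw [variance_const_mul (1/(n:ℝ))
    (fun y : Fin n → ℝ => ∑ i : Fin n, min ((y i)^2) (L^2)) (orthoModel β σ α n)]
  congr 1
  have hfun : (fun y : Fin n → ℝ => ∑ i : Fin n, min ((y i)^2) (L^2))
      = ∑ i : Fin n, (fun t : ℝ => min (t^2) (L^2)) ∘ Function.eval i := by
    funext y; rw [Finset.sum_apply]; rfl
  rw [hfun, hpi]
  have hmem : ∀ i ∈ Finset.univ, MemLp ((fun t : ℝ => min (t^2) (L^2)) ∘ Function.eval i)
      2 (Measure.pi μs) := fun i _ =>
    memLp_minsq (Measure.pi μs) (Function.eval i) (measurable_pi_apply i) L 2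
  rw [IndepFun.variance_sum hmem (fun i _ j _ hij =>
    (indepFun_eval μs hij).comp (measurable_minsq (L^2)) (measurable_minsq (L^2)))]
  refine Finset.sum_congr rfl fun i _ => ?_
  have := variance_comp (Measure.pi μs) (measurable_pi_apply i) (measurable_minsq (L^2))
    (by rw [pi_map_eval]; exact memLp_minsq (μs i) id measurable_id L 2)
  rw [pi_map_eval] at this
  exact this

/-- Under the orthogonal sparsity model with `λₙ → ∞`,
`n · Var[σ̃²ₙ] → 2σ⁴`, where `σ̃²ₙ = (1/n) Σᵢ min{Yᵢ², λₙ²}`. -/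
theorem n_mul_variance_tendsto
    (β σ α : ℝ) (hσ : 0 < σ) (hα0 : 0 ≤ α) (hα1 : α < 1)
    (lam : ℕ → ℝ) (hlam : Tendsto lam atTop atTop) :
    Tendsto
      (fun (n : ℕ) => (n : ℝ) * variance (fun (y : Fin n → ℝ) =>
        (1 / (n : ℝ)) * ∑ i : Fin n, min ((y i)^2) ((lam n)^2)) (orthoModel β σ α n))
      atTop (nhds (2 * σ^4)) := by
  set v : ℝ≥0 := ⟨σ^2, sq_nonneg σ⟩ with hvdef
  have hvcoe : (v:ℝ) = σ^2 := rfl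
  have hv : v ≠ 0 := by
    intro h
    have h2 : (v:ℝ) = 0 := by rw [h]; simp
    rw [hvcoe] at h2
    exact (pow_ne_zero 2 hσ.ne') h2
  set cnt : ℕ → ℕ := fun n => (Finset.univ.filter
    (fun i : Fin n => (i:ℕ) < ⌈(n:ℝ)^α⌉₊)).card with hcnt
  set a : ℕ → ℝ := fun n => (cnt n : ℝ) / n with ha
  set Vb : ℕ → ℝ := fun n =>
    variance (fun x : ℝ => min (x^2) ((lam n)^2)) (gaussianReal β v) with hVb
  set V0 : ℕ → ℝ := fun n =>
    variance (fun x : ℝ => min (x^2) ((lam n)^2)) (gaussianReal 0 v) with hV0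
  -- a n → 0
  have hcnt_le : ∀ n : ℕ, cnt n ≤ ⌈(n:ℝ)^α⌉₊ := by
    intro n
    rw [hcnt]
    calc (Finset.univ.filter (fun i : Fin n => (i:ℕ) < ⌈(n:ℝ)^α⌉₊)).card
        ≤ (Finset.range ⌈(n:ℝ)^α⌉₊).card := by
          refine Finset.card_le_card_of_injOn (fun i => (i:ℕ))
            (fun i hi => by simpa using (Finset.mem_filter.mp hi).2) ?_
          exact fun x _ y _ h => Fin.val_injective h
    _ = ⌈(n:ℝ)^α⌉₊ := Finset.card_range _
  have hcnt_le_n : ∀ n : ℕ, cnt n ≤ n := by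
    intro n
    calc cnt n ≤ Finset.univ.card := Finset.card_filter_le _ _
    _ = n := by simp
  have h0 : Filter.Tendsto a Filter.atTop (nhds 0) := by
    have hb : Filter.Tendsto (fun n : ℕ => (n:ℝ)^(α-1) + (n:ℝ)⁻¹)
        Filter.atTop (nhds 0) := by
      have h1 : Filter.Tendsto (fun n : ℕ => (n:ℝ)^(α-1)) Filter.atTop (nhds 0) := by
        have := (tendsto_rpow_neg_atTop (by linarith : (0:ℝ) < 1 - α)).comp
          tendsto_natCast_atTop_atTop (α := ℕ)
        simpa [Function.comp_def, show -(1-α) = α - 1 by ring] using this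
      have h2 : Filter.Tendsto (fun n : ℕ => (n:ℝ)⁻¹) Filter.atTop (nhds 0) :=
        tendsto_inv_atTop_nhds_zero_nat
      simpa using h1.add h2
    apply squeeze_zero' ?_ ?_ hb
    · filter_upwards with n
      positivity
    · filter_upwards [Filter.eventually_ge_atTop 1] with n hn
      have hnpos : (0:ℝ) < n := by exact_mod_cast hn
      rw [ha]
      rw [div_le_iff₀ hnpos]
      have e1 : (cnt n : ℝ) ≤ (n:ℝ)^α + 1 := by
        calc (cnt n : ℝ) ≤ (⌈(n:ℝ)^α⌉₊ : ℝ) := by exact_mod_cast hcnt_le n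
        _ ≤ (n:ℝ)^α + 1 := (Nat.ceil_lt_add_one (Real.rpow_nonneg hnpos.le α)).le
      calc (cnt n : ℝ) ≤ (n:ℝ)^α + 1 := e1
      _ = ((n:ℝ)^(α-1) + (n:ℝ)⁻¹) * n := by
        rw [Real.rpow_sub hnpos]
        field_simp
        rw [Real.rpow_one]; ring
  -- the two pieces
  set M : ℝ := ∫ x, x^4 ∂(gaussianReal β v) with hM
  have hA : Filter.Tendsto (fun n => a n * Vb n) Filter.atTop (nhds 0) := by
    have hbound : ∀ n, a n * Vb n ≤ a n * M := by
      intro n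
      refine mul_le_mul_of_nonneg_left ?_ (by positivity)
      exact variance_minsq_le β v hv (lam n)
    have hnn : ∀ n, 0 ≤ a n * Vb n := by
      intro n
      exact mul_nonneg (by positivity) (variance_nonneg _ _)
    have hlim : Filter.Tendsto (fun n => a n * M) Filter.atTop (nhds 0) := by
      have := h0.mul_const M
      simpa using this
    exact squeeze_zero hnn hbound hlim
  have hB : Filter.Tendsto (fun n => (1 - a n) * V0 n) Filter.atTop
      (nhds ((1 - 0) * (2 * (v:ℝ)^2))) :=
    (tendsto_const_nhds.sub h0).mul (tendsto_variance_minsq v hv lam hlam)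
  have htot := hA.add hB
  rw [show (0:ℝ) + (1 - 0) * (2 * (v:ℝ)^2) = 2 * σ^4 by rw [hvcoe]; ring] at htot
  refine Filter.Tendsto.congr' ?_ htot
  filter_upwards [Filter.eventually_ge_atTop 1] with n hn
  have hnpos : (0:ℝ) < n := by exact_mod_cast hn
  -- sum evaluation
  have hsum : ∑ i : Fin n, variance (fun x : ℝ => min (x^2) ((lam n)^2))
      (gaussianReal (if (i : ℕ) < ⌈(n : ℝ)^α⌉₊ then β else 0) v)
      = (cnt n : ℝ) * Vb n + ((n:ℝ) - cnt n) * V0 n := by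
    have step1 : ∀ i : Fin n, variance (fun x : ℝ => min (x^2) ((lam n)^2))
        (gaussianReal (if (i : ℕ) < ⌈(n : ℝ)^α⌉₊ then β else 0) v)
        = if (i : ℕ) < ⌈(n : ℝ)^α⌉₊ then Vb n else V0 n := by
      intro i
      exact apply_ite (fun m => variance (fun x : ℝ => min (x^2) ((lam n)^2))
        (gaussianReal m v)) _ β 0
    simp_rw [step1]
    rw [Finset.sum_ite, Finset.sum_const, Finset.sum_const]
    have hneg : (Finset.univ.filter (fun i : Fin n => ¬ ((i:ℕ) < ⌈(n:ℝ)^α⌉₊))).card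
        = n - cnt n := by
      have h := Finset.card_filter_add_card_filter_not (s := (Finset.univ : Finset (Fin n)))
        (p := fun i : Fin n => (i:ℕ) < ⌈(n:ℝ)^α⌉₊)
      simp only [Finset.card_univ, Fintype.card_fin] at h
      beta_reduce at h
      simp only [hcnt]
      omega
    rw [hneg, nsmul_eq_mul, nsmul_eq_mul, Nat.cast_sub (hcnt_le_n n)]
  have hmain := variance_orthoModel β σ α hσ (lam n) n
  rw [hmain, hsum]
  rw [ha]
  have hn0 : (n:ℝ) ≠ 0 := hnpos.ne'
  field_simp
end
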